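/- Let Z_1, ..., Z_n be n ≥ k+1 points of ℝ^k in general position (no hyperplane of ℝ^k contains more than k of them). For τ ∈ (0,1), define the empirical quantile region R^{(n)}(τ) as the intersection, over all u ∈ S^{k−1} and over all minimizers (a,b) of Ψ^{(n)}_{τu}(a,b) := (1/n) Σ_{i=1}^n ρ_τ(u'Z_i − b'Γ_u'Z_i − a), of the closed upper halfspaces {z ∈ ℝ^k : u'z ≥ b'Γ_u'z + a}. Define the empirical halfspace depth HD_n(z) := min{#{i : Z_i ∈ H}/n : H a closed halfspace containing z} and D^{(n)}(t) := {z ∈ ℝ^k : HD_n(z) ≥ t}. Then for any ℓ ∈ {1, 2, ..., n−k} such that D^{(n)}(ℓ/n) has nonempty interior, R^{(n)}(τ) = D^{(n)}(ℓ/n) for all positive τ in [(ℓ−1)/n, ℓ/n). -/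

import Mathlib

open MeasureTheory Matrix ENNReal
open scoped Classical

/-- The quantile check function `ρ_τ`. -/
noncomputable def rho (τ x : ℝ) : ℝ := x * (τ - if x < 0 then 1 else 0)

/-- The empirical objective function `Ψ^{(n)}_{τu}(a, b)`. -/
noncomputable def PsiEmp {k n : ℕ} (Z : Fin n → (Fin (k + 1) → ℝ)) (τ : ℝ)
    (u : Fin (k + 1) → ℝ) (Γ : Matrix (Fin (k + 1)) (Fin k) ℝ)
    (a : ℝ) (b : Fin k → ℝ) : ℝ :=
  (1 / (n : ℝ)) * ∑ i, rho τ (u ⬝ᵥ Z i - b ⬝ᵥ (Γᵀ *ᵥ Z i) - a)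

/-- Empirical halfspace depth: the minimum, over closed halfspaces `H` containing `z`,
of the proportion of data points lying in `H`. -/
noncomputable def empDepth {k n : ℕ} (Z : Fin n → (Fin (k + 1) → ℝ))
    (z : Fin (k + 1) → ℝ) : ℝ :=
  sInf {r : ℝ | ∃ v : Fin (k + 1) → ℝ, ∃ c : ℝ, v ≠ 0 ∧ c ≤ v ⬝ᵥ z ∧
    r = ((Finset.univ.filter fun i => c ≤ v ⬝ᵥ Z i).card : ℝ) / n}

/-- The empirical halfspace depth region of order `t`. -/
noncomputable def empDepthRegion {k n : ℕ} (Z : Fin n → (Fin (k + 1) → ℝ)) (t : ℝ) :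
    Set (Fin (k + 1) → ℝ) :=
  {z | t ≤ empDepth Z z}

/-- The empirical quantile region `R^{(n)}(τ)`: intersection of all upper empirical
`τu`-quantile halfspaces, over all directions `u`, all admissible `Γ_u`, and all
minimizers of the empirical objective. -/
def empQuantileRegion {k n : ℕ} (Z : Fin n → (Fin (k + 1) → ℝ)) (τ : ℝ) :
    Set (Fin (k + 1) → ℝ) :=
  {z | ∀ u : Fin (k + 1) → ℝ, ∀ Γ : Matrix (Fin (k + 1)) (Fin k) ℝ, ∀ a : ℝ, ∀ b : Fin k → ℝ,
    (∑ i, u i ^ 2 = 1) → Γᵀ * Γ = 1 → Γᵀ *ᵥ u = 0 →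
    (∀ a' : ℝ, ∀ b' : Fin k → ℝ, PsiEmp Z τ u Γ a b ≤ PsiEmp Z τ u Γ a' b') →
    b ⬝ᵥ (Γᵀ *ᵥ z) + a ≤ u ⬝ᵥ z}


/-- subgradient inequality for the check function -/
lemma rho_subgrad {τ : ℝ} (hτ0 : 0 < τ) (hτ1 : τ < 1) (x y g : ℝ)
    (h1 : x < 0 → g = τ - 1) (h2 : 0 < x → g = τ)
    (h3 : τ - 1 ≤ g) (h4 : g ≤ τ) :
    rho τ x + g * (y - x) ≤ rho τ y := by
  unfold rho
  rcases lt_trichotomy x 0 with hx | hx | hx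
  · rw [h1 hx]
    rcases lt_or_ge y 0 with hy | hy
    · simp only [if_pos hx, if_pos hy]; ring_nf; nlinarith
    · simp only [if_pos hx, if_neg (not_lt.mpr hy)]; nlinarith
  · subst hx
    rcases lt_or_ge y 0 with hy | hy
    · simp only [if_pos hy]; simp; nlinarith
    · simp only [if_neg (not_lt.mpr hy)]; simp; nlinarith
  · rw [h2 hx]
    rcases lt_or_ge y 0 with hy | hy
    · simp only [if_neg (not_lt.mpr hx.le), if_pos hy]; nlinarith
    · simp only [if_neg (not_lt.mpr hx.le), if_neg (not_lt.mpr hy)]; nlinarith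


/-- existence of the ℓ-th largest value -/
lemma exists_orderstat {n : ℕ} (vals : Fin n → ℝ) (ℓ : ℕ) (h1 : 1 ≤ ℓ) (h2 : ℓ ≤ n) :
    ∃ s : ℝ, ℓ ≤ (Finset.univ.filter fun i => s ≤ vals i).card ∧
      (Finset.univ.filter fun i => s < vals i).card < ℓ := by
  have hn : 0 < n := lt_of_lt_of_le h1 h2
  have hne : (Finset.univ : Finset (Fin n)).Nonempty := by
    simpa [Finset.univ_nonempty_iff] using Fin.pos_iff_nonempty.mp hn
  set T : Finset ℝ := Finset.univ.image vals with hT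
  have hTne : T.Nonempty := hne.image vals
  set G : Finset ℝ := T.filter (fun c => ℓ ≤ (Finset.univ.filter fun i => c ≤ vals i).card) with hG
  have hGne : G.Nonempty := by
    refine ⟨T.min' hTne, Finset.mem_filter.mpr ⟨Finset.min'_mem _ _, ?_⟩⟩
    have : (Finset.univ.filter fun i => T.min' hTne ≤ vals i) = Finset.univ := by
      refine Finset.filter_true_of_mem fun i _ => ?_
      exact Finset.min'_le _ _ (Finset.mem_image_of_mem vals (Finset.mem_univ i))
    rw [this, Finset.card_univ, Fintype.card_fin]; exact h2
  refine ⟨G.max' hGne, (Finset.mem_filter.mp (Finset.max'_mem _ hGne)).2, ?_⟩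
  by_contra hcon
  push_neg at hcon
  set s := G.max' hGne
  have hSne : (Finset.univ.filter fun i => s < vals i).Nonempty := by
    rw [← Finset.card_pos]; exact lt_of_lt_of_le h1 hcon
  set c' := (hSne.image vals).to_subtype
  obtain ⟨i0, hi0mem, hi0⟩ := Finset.exists_min_image _ vals hSne
  have hi0s : s < vals i0 := (Finset.mem_filter.mp hi0mem).2
  have hc'G : vals i0 ∈ G := by
    refine Finset.mem_filter.mpr ⟨Finset.mem_image_of_mem vals (Finset.mem_univ i0), ?_⟩
    refine le_trans hcon (Finset.card_le_card ?_)
    intro j hj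
    have hj' := (Finset.mem_filter.mp hj).2
    exact Finset.mem_filter.mpr ⟨Finset.mem_univ j, hi0 j hj⟩
  have := Finset.le_max' G _ hc'G
  exact absurd this (not_le.mpr hi0s)

lemma exists_Gamma {k : ℕ} (u : Fin (k+1) → ℝ) (hu : ∑ i, u i ^ 2 = 1) :
    ∃ Γ : Matrix (Fin (k+1)) (Fin k) ℝ, Γᵀ * Γ = 1 ∧ Γᵀ *ᵥ u = 0 ∧
      ∀ w : Fin (k+1) → ℝ, Γ *ᵥ (Γᵀ *ᵥ w) = w - (u ⬝ᵥ w) • u := by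
  classical
  set E := EuclideanSpace ℝ (Fin (k+1))
  have hrank : Module.finrank ℝ E = Fintype.card (Fin (k+1)) := by
    simp [E]
  set u' : E := (WithLp.equiv 2 _).symm u with hu'
  have hu'i : ∀ i, u' i = u i := fun i => rfl
  have honu : Orthonormal ℝ (({0} : Set (Fin (k+1))).restrict (fun _ : Fin (k+1) => u')) := by
    rw [orthonormal_iff_ite]
    rintro ⟨i, hi⟩ ⟨j, hj⟩
    simp only [Set.mem_singleton_iff] at hi hj
    subst hi; subst hj
    simp only [Set.restrict_apply, if_pos rfl]
    rw [PiLp.inner_apply]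
    exact (show ∑ x, u x * u x = 1 by simpa [sq] using hu)
  obtain ⟨b, hb⟩ := honu.exists_orthonormalBasis_extension_of_card_eq hrank
  have hb0 : ∀ i, b 0 i = u i := by
    have := hb 0 (Set.mem_singleton 0)
    intro i; rw [this]; rfl
  have horth : ∀ p q : Fin (k+1), (∑ i, b p i * b q i) = if p = q then 1 else 0 := by
    intro p q
    have := (orthonormal_iff_ite (𝕜 := ℝ)).mp b.orthonormal p q
    rw [PiLp.inner_apply] at this
    simpa [mul_comm] using this
  set A : Matrix (Fin (k+1)) (Fin (k+1)) ℝ := fun i j => b j i with hA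
  have hAtA : Aᵀ * A = 1 := by
    ext p q
    simp only [Matrix.mul_apply, Matrix.transpose_apply, hA, Matrix.one_apply]
    exact horth p q
  have hAAt : A * Aᵀ = 1 := mul_eq_one_comm.mp hAtA
  have hAAt' : ∀ i l, (∑ j, A i j * A l j) = if i = l then 1 else 0 := by
    intro i l
    have := congrFun (congrFun hAAt i) l
    simpa [Matrix.mul_apply, Matrix.transpose_apply, Matrix.one_apply] using this
  refine ⟨fun i j => A i (Fin.succ j), ?_, ?_, ?_⟩
  · ext p q
    simp only [Matrix.mul_apply, Matrix.transpose_apply, Matrix.one_apply]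
    have hpq : (∑ i, A i (Fin.succ p) * A i (Fin.succ q)) = if Fin.succ p = Fin.succ q then 1 else 0 := by
      rw [← horth (Fin.succ p) (Fin.succ q)]
    change (∑ i, A i (Fin.succ p) * A i (Fin.succ q)) = _; rw [hpq]
    simp [Fin.succ_inj]
  · funext j
    have : (∑ i, A i (Fin.succ j) * u i) = 0 := by
      have h := horth (Fin.succ j) 0
      rw [if_neg (Fin.succ_ne_zero j)] at h
      rw [← h]
      exact Finset.sum_congr rfl fun i _ => by rw [hb0, hA]
    exact this
  · intro w
    funext i
    have key : ∀ l, (∑ j : Fin k, A i (Fin.succ j) * A l (Fin.succ j))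
        = (if i = l then 1 else 0) - u i * u l := by
      intro l
      have := hAAt' i l
      rw [Fin.sum_univ_succ] at this
      have h0 : A i 0 = u i := by rw [hA]; exact hb0 i
      have h0' : A l 0 = u l := by rw [hA]; exact hb0 l
      rw [h0, h0'] at this
      linarith [this]
    simp only [Matrix.mulVec, dotProduct, Matrix.transpose_apply, Pi.sub_apply,
      Pi.smul_apply, smul_eq_mul]
    calc ∑ j : Fin k, A i (Fin.succ j) * ∑ l, A l (Fin.succ j) * w l
        = ∑ j : Fin k, ∑ l, A i (Fin.succ j) * A l (Fin.succ j) * w l := by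
          refine Finset.sum_congr rfl fun j _ => ?_
          rw [Finset.mul_sum]; exact Finset.sum_congr rfl fun l _ => by ring
      _ = ∑ l, ∑ j : Fin k, A i (Fin.succ j) * A l (Fin.succ j) * w l := Finset.sum_comm
      _ = ∑ l, ((if i = l then 1 else 0) - u i * u l) * w l := by
          refine Finset.sum_congr rfl fun l _ => ?_
          rw [← Finset.sum_mul, key l]
      _ = w i - (∑ l, u l * w l) * u i := by
          simp only [sub_mul, Finset.sum_sub_distrib, ite_mul, one_mul, zero_mul]
          rw [Finset.sum_ite_eq]
          simp only [Finset.mem_univ, if_pos]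
          rw [Finset.sum_mul]
          congr 1
          exact Finset.sum_congr rfl fun l _ => by ring

/-- sufficiency of the subgradient conditions for global minimality -/
lemma psi_min {k n : ℕ} (Z : Fin n → (Fin (k + 1) → ℝ)) {τ : ℝ} (hτ0 : 0 < τ) (hτ1 : τ < 1)
    (u : Fin (k + 1) → ℝ) (Γ : Matrix (Fin (k + 1)) (Fin k) ℝ) (a : ℝ) (b : Fin k → ℝ)
    (g : Fin n → ℝ)
    (hg1 : ∀ i, u ⬝ᵥ Z i - b ⬝ᵥ (Γᵀ *ᵥ Z i) - a < 0 → g i = τ - 1)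
    (hg2 : ∀ i, 0 < u ⬝ᵥ Z i - b ⬝ᵥ (Γᵀ *ᵥ Z i) - a → g i = τ)
    (hg3 : ∀ i, τ - 1 ≤ g i) (hg4 : ∀ i, g i ≤ τ)
    (hsum : ∑ i, g i = 0)
    (hmom : ∀ j, ∑ i, g i * (Γᵀ *ᵥ Z i) j = 0) :
    ∀ a' : ℝ, ∀ b' : Fin k → ℝ, PsiEmp Z τ u Γ a b ≤ PsiEmp Z τ u Γ a' b' := by
  intro a' b'
  set r : Fin n → ℝ := fun i => u ⬝ᵥ Z i - b ⬝ᵥ (Γᵀ *ᵥ Z i) - a with hr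
  set r' : Fin n → ℝ := fun i => u ⬝ᵥ Z i - b' ⬝ᵥ (Γᵀ *ᵥ Z i) - a' with hr'
  have key : ∀ i, rho τ (r i) + g i * (r' i - r i) ≤ rho τ (r' i) := fun i =>
    rho_subgrad hτ0 hτ1 (r i) (r' i) (g i) (hg1 i) (hg2 i) (hg3 i) (hg4 i)
  have hdiff : ∀ i, r' i - r i = (a - a') + ∑ j, (b j - b' j) * (Γᵀ *ᵥ Z i) j := by
    intro i
    simp only [hr, hr', dotProduct]
    have hsub : ∑ j, (b j - b' j) * (Γᵀ *ᵥ Z i) j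
        = ∑ j, b j * (Γᵀ *ᵥ Z i) j - ∑ j, b' j * (Γᵀ *ᵥ Z i) j := by
      rw [← Finset.sum_sub_distrib]
      exact Finset.sum_congr rfl fun j _ => by ring
    rw [hsub]; ring
  have hzero : ∑ i, g i * (r' i - r i) = 0 := by
    have : ∑ i, g i * (r' i - r i)
        = (a - a') * ∑ i, g i + ∑ i, ∑ j, (b j - b' j) * (g i * (Γᵀ *ᵥ Z i) j) := by
      rw [Finset.mul_sum, ← Finset.sum_add_distrib]
      refine Finset.sum_congr rfl fun i _ => ?_
      rw [hdiff i, mul_add, Finset.mul_sum]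
      congr 1
      · ring
      · exact Finset.sum_congr rfl fun j _ => by ring
    rw [this, hsum, mul_zero, zero_add, Finset.sum_comm]
    refine Finset.sum_eq_zero fun j _ => ?_
    rw [← Finset.mul_sum, hmom j, mul_zero]
  have hsumle : ∑ i, rho τ (r i) ≤ ∑ i, rho τ (r' i) := by
    calc ∑ i, rho τ (r i) = ∑ i, (rho τ (r i) + g i * (r' i - r i)) := by
          rw [Finset.sum_add_distrib, hzero, add_zero]
      _ ≤ ∑ i, rho τ (r' i) := Finset.sum_le_sum fun i _ => key i
  unfold PsiEmp
  apply mul_le_mul_of_nonneg_left hsumle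
  positivity


/-- at a minimizer, the number of strictly negative residuals is at most τn -/
lemma count_neg_le {k n : ℕ} (Z : Fin n → (Fin (k + 1) → ℝ)) {τ : ℝ} (hτ0 : 0 < τ) (hτ1 : τ < 1)
    (hn : 0 < n)
    (u : Fin (k + 1) → ℝ) (Γ : Matrix (Fin (k + 1)) (Fin k) ℝ) (a : ℝ) (b : Fin k → ℝ)
    (hmin : ∀ a' : ℝ, ∀ b' : Fin k → ℝ, PsiEmp Z τ u Γ a b ≤ PsiEmp Z τ u Γ a' b') :
    ((Finset.univ.filter fun i => u ⬝ᵥ Z i - b ⬝ᵥ (Γᵀ *ᵥ Z i) - a < 0).card : ℝ) ≤ τ * n := by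
  set r : Fin n → ℝ := fun i => u ⬝ᵥ Z i - b ⬝ᵥ (Γᵀ *ᵥ Z i) - a with hr
  set N := Finset.univ.filter fun i => r i < 0 with hN
  rcases N.eq_empty_or_nonempty with hNe | hNe
  · rw [hNe]; simp; positivity
  obtain ⟨i0, hi0mem, hi0⟩ := Finset.exists_min_image N (fun i => -(r i)) hNe
  set t := -(r i0) with ht
  have htpos : 0 < t := by
    have := (Finset.mem_filter.mp hi0mem).2
    simp only [ht]; linarith
  have hrt : ∀ i, u ⬝ᵥ Z i - b ⬝ᵥ (Γᵀ *ᵥ Z i) - (a - t) = r i + t := fun i => by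
    simp only [hr]; ring
  have hpt : ∀ i, rho τ (r i + t) = rho τ (r i) + (if r i < 0 then t * (τ - 1) else t * τ) := by
    intro i
    by_cases hi : r i < 0
    · have hle : r i + t ≤ 0 := by
        have := hi0 i (Finset.mem_filter.mpr ⟨Finset.mem_univ i, hi⟩)
        simp only [ht] at this ⊢; linarith
      rcases lt_or_eq_of_le hle with hlt | heq
      · simp only [rho, if_pos hi, if_pos hlt]; ring
      · have h0 : rho τ (r i + t) = 0 := by rw [heq]; simp [rho]
        have hri : rho τ (r i) = r i * (τ - 1) := by simp [rho, if_pos hi]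
        rw [h0, hri, if_pos hi]
        have hfact : r i * (τ - 1) + t * (τ - 1) = (r i + t) * (τ - 1) := by ring
        rw [hfact, heq]; ring
    · push_neg at hi
      have h1 : ¬ (r i + t < 0) := by push_neg; linarith
      simp only [rho, if_neg (not_lt.mpr hi), if_neg h1]; ring
  have hsum : ∑ i, rho τ (r i + t) = ∑ i, rho τ (r i) + (t * (τ - 1)) * N.card + (t * τ) * (n - N.card) := by
    have : ∑ i, rho τ (r i + t) = ∑ i, (rho τ (r i) + (if r i < 0 then t * (τ - 1) else t * τ)) :=
      Finset.sum_congr rfl fun i _ => hpt i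
    rw [this, Finset.sum_add_distrib, add_assoc]
    congr 1
    have hNn : N.card ≤ n := by
      have := Finset.card_filter_le (Finset.univ : Finset (Fin n)) (fun i => r i < 0)
      simpa [hN] using this
    have hcc : (Finset.univ.filter fun i => ¬ r i < 0).card = n - N.card := by
      have h := Finset.card_filter_add_card_filter_not
        (s := (Finset.univ : Finset (Fin n))) (p := fun i => r i < 0)
      simp only [Finset.card_univ, Fintype.card_fin] at h
      rw [← hN] at h
      omega
    rw [Finset.sum_ite, Finset.sum_const, Finset.sum_const, hcc]
    simp only [← hN, nsmul_eq_mul, Nat.cast_sub hNn]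
    ring
  have hminle := hmin (a - t) b
  unfold PsiEmp at hminle
  have hsum' : ∑ i, rho τ (u ⬝ᵥ Z i - b ⬝ᵥ (Γᵀ *ᵥ Z i) - (a - t))
      = ∑ i, rho τ (r i + t) := Finset.sum_congr rfl fun i _ => by rw [hrt i]
  have hLHS : ∑ i, rho τ (u ⬝ᵥ Z i - b ⬝ᵥ (Γᵀ *ᵥ Z i) - a) = ∑ i, rho τ (r i) := rfl
  rw [hsum', hsum, hLHS] at hminle
  have hnpos : (0:ℝ) < (n:ℝ) := by exact_mod_cast hn
  have hinv : (0:ℝ) < 1 / (n:ℝ) := by positivity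
  have h2 : (0:ℝ) ≤ (t * (τ - 1)) * N.card + (t * τ) * ((n:ℝ) - N.card) := by
    have := (mul_le_mul_iff_right₀ hinv).mp hminle
    linarith
  nlinarith [htpos, h2]

lemma exists_avoid {d : ℕ} (U : Set (Fin d → ℝ)) (hU : IsOpen U) (hne : U.Nonempty)
    {ι : Type*} [Fintype ι] (m : ι → (Fin d → ℝ)) :
    ∃ v ∈ U, ∀ p : ι, m p ≠ 0 → v ⬝ᵥ m p ≠ 0 := by
  classical
  set B : Set (Fin d → ℝ) := ⋃ p : ι, {v | m p ≠ 0 ∧ v ⬝ᵥ m p = 0} with hB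
  have hBnull : volume B = 0 := by
    refine measure_iUnion_null fun p => ?_
    rcases eq_or_ne (m p) 0 with h | h
    · have : {v : Fin d → ℝ | m p ≠ 0 ∧ v ⬝ᵥ m p = 0} = ∅ := by
        ext v; simp [h]
      simp [this]
    · set φ : (Fin d → ℝ) →ₗ[ℝ] ℝ :=
        { toFun := fun v => v ⬝ᵥ m p
          map_add' := fun x y => add_dotProduct x y (m p)
          map_smul' := fun c x => by simp [smul_dotProduct] } with hφ
      have hker : LinearMap.ker φ ≠ ⊤ := by
        intro hk
        have : φ (m p) = 0 := by
          rw [← LinearMap.mem_ker, hk]; trivial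
        have hmm : m p ⬝ᵥ m p = 0 := this
        exact h (dotProduct_self_eq_zero.mp hmm)
      have hsub : {v : Fin d → ℝ | m p ≠ 0 ∧ v ⬝ᵥ m p = 0} ⊆ (LinearMap.ker φ : Set (Fin d → ℝ)) := by
        intro v hv
        simp only [Set.mem_setOf_eq] at hv
        simpa [LinearMap.mem_ker, hφ] using hv.2
      exact measure_mono_null hsub (Measure.addHaar_submodule volume _ hker)
  have hpos : 0 < volume U := hU.measure_pos volume hne
  have : ¬ (U ⊆ B) := by
    intro hsub
    have := measure_mono_null hsub hBnull
    rw [this] at hpos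
    exact lt_irrefl 0 hpos
  obtain ⟨v, hvU, hvB⟩ := Set.not_subset.mp this
  refine ⟨v, hvU, fun p hp => ?_⟩
  intro hdot
  exact hvB (Set.mem_iUnion.mpr ⟨p, ⟨hp, hdot⟩⟩)

set_option maxHeartbeats 1600000 in
theorem stmt17 {k n : ℕ} (Z : Fin n → (Fin (k + 1) → ℝ))
    (hn : k + 2 ≤ n)
    (hgen : ∀ v : Fin (k + 1) → ℝ, ∀ c : ℝ, v ≠ 0 →
      (Finset.univ.filter fun i => v ⬝ᵥ Z i = c).card ≤ k + 1) :
    ∀ ℓ : ℕ, 1 ≤ ℓ → ℓ ≤ n - (k + 1) →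
      (interior (empDepthRegion Z ((ℓ : ℝ) / n))).Nonempty →
      ∀ τ : ℝ, 0 < τ → ((ℓ : ℝ) - 1) / n ≤ τ → τ < (ℓ : ℝ) / n →
        empQuantileRegion Z τ = empDepthRegion Z ((ℓ : ℝ) / n) := by
  intro ℓ hℓ1 hℓ2 _hint τ hτ0 hτl hτu
  have hn0 : 0 < n := by omega
  have hnR : (0:ℝ) < (n:ℝ) := by exact_mod_cast hn0
  have hℓn : ℓ ≤ n := by omega
  have hℓnR : (ℓ:ℝ) ≤ n := by exact_mod_cast hℓn
  have hτ1 : τ < 1 := lt_of_lt_of_le hτu (by rw [div_le_one hnR]; exact hℓnR)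
  have hτn1 : (ℓ:ℝ) - 1 ≤ τ * n := by
    have h := (div_le_iff₀ hnR).mp hτl
    linarith
  have hτn2 : τ * n < (ℓ:ℝ) := by
    have h := (lt_div_iff₀ hnR).mp hτu
    linarith
  have hdotlem : ∀ (b : Fin k → ℝ) (Γ : Matrix (Fin (k+1)) (Fin k) ℝ) (x : Fin (k+1) → ℝ),
      b ⬝ᵥ (Γᵀ *ᵥ x) = (Γ *ᵥ b) ⬝ᵥ x := by
    intro b Γ x
    rw [Matrix.dotProduct_mulVec, Matrix.vecMul_transpose, dotProduct_comm]
  ext z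
  simp only [empQuantileRegion, empDepthRegion, Set.mem_setOf_eq]
  constructor
  · -- hard direction
    intro hz
    unfold empDepth
    apply le_csInf
    · refine ⟨((Finset.univ.filter fun i => ((fun _ => (1:ℝ)) : Fin (k+1) → ℝ) ⬝ᵥ z ≤ (fun _ => (1:ℝ)) ⬝ᵥ Z i).card : ℝ) / n,
        (fun _ => (1:ℝ)), (fun _ => (1:ℝ)) ⬝ᵥ z, ?_, le_refl _, rfl⟩
      intro h0
      have := congrFun h0 0
      simp at this
    · rintro r ⟨v0, c0, hv0, hc0, rfl⟩
      rw [div_le_div_iff₀ hnR hnR]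
      by_contra hlt
      push_neg at hlt
      have hcard0 : (Finset.univ.filter fun i => c0 ≤ v0 ⬝ᵥ Z i).card < ℓ := by
        by_contra hc
        push_neg at hc
        have : (ℓ:ℝ) ≤ (Finset.univ.filter fun i => c0 ≤ v0 ⬝ᵥ Z i).card := by exact_mod_cast hc
        nlinarith
      -- the low set W for v0
      set W := Finset.univ.filter fun i => v0 ⬝ᵥ Z i < v0 ⬝ᵥ z with hW
      have hWcard : n - ℓ + 1 ≤ W.card := by
        have hcompl : (Finset.univ.filter fun i => ¬ v0 ⬝ᵥ Z i < v0 ⬝ᵥ z).card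
            ≤ (Finset.univ.filter fun i => c0 ≤ v0 ⬝ᵥ Z i).card := by
          apply Finset.card_le_card
          intro i hi
          have := (Finset.mem_filter.mp hi).2
          push_neg at this
          exact Finset.mem_filter.mpr ⟨Finset.mem_univ i, le_trans hc0 this⟩
        have hpart := Finset.card_filter_add_card_filter_not
          (s := (Finset.univ : Finset (Fin n))) (p := fun i => v0 ⬝ᵥ Z i < v0 ⬝ᵥ z)
        simp only [Finset.card_univ, Fintype.card_fin] at hpart
        rw [← hW] at hpart
        omega
      -- the open set U
      set U : Set (Fin (k+1) → ℝ) := {v | ∀ i ∈ W, v ⬝ᵥ Z i < v ⬝ᵥ z} with hU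
      have hUopen : IsOpen U := by
        have hUeq : U = ⋂ i ∈ W, {v : Fin (k+1) → ℝ | v ⬝ᵥ Z i < v ⬝ᵥ z} := by
          ext v; simp [hU]
        rw [hUeq]
        refine isOpen_biInter_finset fun i _ => ?_
        have hcont : Continuous fun v : Fin (k+1) → ℝ => v ⬝ᵥ Z i - v ⬝ᵥ z := by
          apply Continuous.sub
          · exact continuous_finset_sum _ fun l _ => (continuous_apply l).mul continuous_const
          · exact continuous_finset_sum _ fun l _ => (continuous_apply l).mul continuous_const
        have : {v : Fin (k+1) → ℝ | v ⬝ᵥ Z i < v ⬝ᵥ z}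
            = (fun v : Fin (k+1) → ℝ => v ⬝ᵥ Z i - v ⬝ᵥ z) ⁻¹' Set.Iio 0 := by
          ext v; simp [sub_neg]
        rw [this]
        exact isOpen_Iio.preimage hcont
      have hUne : U.Nonempty := ⟨v0, fun i hi => (Finset.mem_filter.mp hi).2⟩
      -- the moment vectors
      set mvec : Finset (Fin n) × Finset (Fin n) → (Fin (k+1) → ℝ) := fun P l =>
        (τ - 1) * (∑ i ∈ P.1, Z i l) + τ * (∑ i ∈ Finset.univ \ (P.1 ∪ P.2), Z i l)
          + (((P.1.card : ℝ) + τ * P.2.card - τ * n) / P.2.card) * (∑ i ∈ P.2, Z i l)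
        with hmvec
      obtain ⟨v1, hv1U, hv1avoid⟩ := exists_avoid U hUopen hUne mvec
      -- v1 is nonzero
      have hWne : W.Nonempty := Finset.card_pos.mp (by omega)
      have hv1ne : v1 ≠ 0 := by
        intro h0
        obtain ⟨i1, hi1⟩ := hWne
        have := hv1U i1 hi1
        rw [h0] at this
        simp [zero_dotProduct] at this
      -- order statistic for v1
      set vals : Fin n → ℝ := fun i => v1 ⬝ᵥ Z i with hvals
      obtain ⟨s, hs1, hs2⟩ := exists_orderstat vals ℓ hℓ1 hℓn
      -- z is strictly above level s
      have hsz : s < v1 ⬝ᵥ z := by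
        by_contra hzs
        push_neg at hzs
        have hdisj : Disjoint (Finset.univ.filter fun i => s ≤ vals i) W := by
          rw [Finset.disjoint_left]
          intro i hi hiW
          have h1 := (Finset.mem_filter.mp hi).2
          have h2 := hv1U i hiW
          have h3 : vals i = v1 ⬝ᵥ Z i := rfl
          linarith
        have := Finset.card_union_of_disjoint hdisj
        have hle := Finset.card_le_univ ((Finset.univ.filter fun i => s ≤ vals i) ∪ W)
        simp only [Finset.card_univ, Fintype.card_fin] at hle
        omega
      -- the three pattern sets
      set Hs := Finset.univ.filter fun i => s < vals i with hHs
      set Ts := Finset.univ.filter fun i => vals i = s with hTs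
      set Ls := Finset.univ.filter fun i => vals i < s with hLs
      have hHTdisj : Disjoint Hs Ts := by
        rw [Finset.disjoint_left]
        intro i hi1 hi2
        exact absurd (Finset.mem_filter.mp hi2).2 (ne_of_gt (Finset.mem_filter.mp hi1).2)
      have hHTs : (Finset.univ.filter fun i => s ≤ vals i) = Hs ∪ Ts := by
        ext i
        simp only [Finset.mem_filter, Finset.mem_univ, true_and, Finset.mem_union, hHs, hTs]
        constructor
        · intro h
          rcases lt_or_eq_of_le h with h | h
          · exact Or.inl h
          · exact Or.inr h.symm
        · rintro (h | h)
          · exact le_of_lt h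
          · exact le_of_eq h.symm
      have hpt : ℓ ≤ Hs.card + Ts.card := by
        rw [hHTs, Finset.card_union_of_disjoint hHTdisj] at hs1
        exact hs1
      have hLc : Ls.card + (Hs.card + Ts.card) = n := by
        have hpart := Finset.card_filter_add_card_filter_not
          (s := (Finset.univ : Finset (Fin n))) (p := fun i => vals i < s)
        simp only [Finset.card_univ, Fintype.card_fin] at hpart
        have hnegeq : (Finset.univ.filter fun i => ¬ vals i < s) = Hs ∪ Ts := by
          rw [← hHTs]
          ext i
          simp only [Finset.mem_filter, Finset.mem_univ, true_and, not_lt]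
        rw [hnegeq, Finset.card_union_of_disjoint hHTdisj, ← hLs] at hpart
        exact hpart
      have hTpos : 0 < Ts.card := by omega
      have hTposR : (0:ℝ) < (Ts.card : ℝ) := by exact_mod_cast hTpos
      have hpR : (Hs.card : ℝ) ≤ τ * n := by
        have : (Hs.card : ℝ) ≤ (ℓ:ℝ) - 1 := by
          have : Hs.card ≤ ℓ - 1 := by omega
          have h2 : ((Hs.card : ℕ) : ℝ) ≤ ((ℓ - 1 : ℕ) : ℝ) := by exact_mod_cast this
          rwa [Nat.cast_sub hℓ1, Nat.cast_one] at h2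
        linarith
      have hptR : τ * n < (Hs.card : ℝ) + Ts.card := by
        have : (ℓ:ℝ) ≤ (Hs.card : ℝ) + Ts.card := by exact_mod_cast hpt
        linarith
      -- multipliers
      set μ : ℝ := ((Hs.card : ℝ) + τ * Ts.card - τ * n) / Ts.card with hμ
      have hμ2 : μ ≤ τ := by
        rw [hμ, div_le_iff₀ hTposR]
        nlinarith
      have hμ1 : τ - 1 ≤ μ := by
        rw [hμ, le_div_iff₀ hTposR]
        nlinarith
      set g : Fin n → ℝ := fun i => if vals i < s then τ else if s < vals i then τ - 1 else μ
        with hg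
      have hgval_L : ∀ i ∈ Ls, g i = τ := fun i hi => by
        simp only [hg]; rw [if_pos (Finset.mem_filter.mp hi).2]
      have hgval_H : ∀ i ∈ Hs, g i = τ - 1 := fun i hi => by
        have h := (Finset.mem_filter.mp hi).2
        simp only [hg]; rw [if_neg (not_lt.mpr (le_of_lt h)), if_pos h]
      have hgval_T : ∀ i ∈ Ts, g i = μ := fun i hi => by
        have h := (Finset.mem_filter.mp hi).2
        simp only [hg]; rw [if_neg (not_lt.mpr (le_of_eq h)), if_neg (not_lt.mpr (le_of_eq h.symm))]
      have hsplit : ∀ f : Fin n → ℝ, ∑ i, f i = ∑ i ∈ Ls, f i + (∑ i ∈ Hs, f i + ∑ i ∈ Ts, f i) := by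
        intro f
        have hdisj2 : Disjoint Ls (Hs ∪ Ts) := by
          rw [Finset.disjoint_left]
          intro i hi1 hi2
          have h1 := (Finset.mem_filter.mp hi1).2
          rcases Finset.mem_union.mp hi2 with h | h
          · linarith [(Finset.mem_filter.mp h).2]
          · linarith [(Finset.mem_filter.mp h).2]
        have huniv : (Finset.univ : Finset (Fin n)) = Ls ∪ (Hs ∪ Ts) := by
          symm
          rw [Finset.eq_univ_iff_forall]
          intro i
          rcases lt_trichotomy (vals i) s with h | h | h
          · exact Finset.mem_union_left _ (Finset.mem_filter.mpr ⟨Finset.mem_univ i, h⟩)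
          · exact Finset.mem_union_right _
              (Finset.mem_union_right _ (Finset.mem_filter.mpr ⟨Finset.mem_univ i, h⟩))
          · exact Finset.mem_union_right _
              (Finset.mem_union_left _ (Finset.mem_filter.mpr ⟨Finset.mem_univ i, h⟩))
        rw [huniv, Finset.sum_union hdisj2, Finset.sum_union hHTdisj]
      have hgsum : ∑ i, g i = 0 := by
        rw [hsplit g]
        rw [show (∑ i ∈ Ls, g i) = ∑ _i ∈ Ls, τ from Finset.sum_congr rfl hgval_L,
          show (∑ i ∈ Hs, g i) = ∑ _i ∈ Hs, (τ - 1) from Finset.sum_congr rfl hgval_H,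
          show (∑ i ∈ Ts, g i) = ∑ _i ∈ Ts, μ from Finset.sum_congr rfl hgval_T]
        simp only [Finset.sum_const, nsmul_eq_mul]
        have hLcR : (Ls.card : ℝ) = (n:ℝ) - Hs.card - Ts.card := by
          have : (Ls.card : ℝ) + ((Hs.card:ℝ) + Ts.card) = n := by exact_mod_cast hLc
          linarith
        rw [hLcR, hμ]
        field_simp
        ring
      -- the moment vector
      set m : Fin (k+1) → ℝ := fun l => ∑ i, g i * Z i l with hm
      have hmeq : m = mvec (Hs, Ts) := by
        funext l
        rw [hm, hmvec]
        simp only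
        have huniv2 : Finset.univ \ (Hs ∪ Ts) = Ls := by
          ext i
          constructor
          · intro hi
            have h2 := (Finset.mem_sdiff.mp hi).2
            rcases lt_trichotomy (vals i) s with h | h | h
            · exact Finset.mem_filter.mpr ⟨Finset.mem_univ i, h⟩
            · exact absurd (Finset.mem_union_right _
                (Finset.mem_filter.mpr ⟨Finset.mem_univ i, h⟩)) h2
            · exact absurd (Finset.mem_union_left _
                (Finset.mem_filter.mpr ⟨Finset.mem_univ i, h⟩)) h2
          · intro hi
            have h := (Finset.mem_filter.mp hi).2
            refine Finset.mem_sdiff.mpr ⟨Finset.mem_univ i, ?_⟩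
            intro hmem
            rcases Finset.mem_union.mp hmem with h2 | h2
            · exact absurd (Finset.mem_filter.mp h2).2 (not_lt.mpr h.le)
            · exact (ne_of_lt h) (Finset.mem_filter.mp h2).2
        rw [huniv2, hsplit (fun i => g i * Z i l)]
        rw [show (∑ i ∈ Ls, g i * Z i l) = ∑ i ∈ Ls, τ * Z i l from
            Finset.sum_congr rfl fun i hi => by rw [hgval_L i hi],
          show (∑ i ∈ Hs, g i * Z i l) = ∑ i ∈ Hs, (τ - 1) * Z i l from
            Finset.sum_congr rfl fun i hi => by rw [hgval_H i hi],
          show (∑ i ∈ Ts, g i * Z i l) = ∑ i ∈ Ts, μ * Z i l from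
            Finset.sum_congr rfl fun i hi => by rw [hgval_T i hi]]
        rw [← Finset.mul_sum, ← Finset.mul_sum, ← Finset.mul_sum]
        rw [← hμ]
        ring
      -- construct u and lam
      have hmain : ∃ (u : Fin (k+1) → ℝ) (lam : ℝ), (∑ i, u i ^ 2 = 1) ∧ u ⬝ᵥ v1 < 0 ∧
          ∀ l, m l = lam * u l := by
        rcases eq_or_ne m 0 with hm0 | hm0
        · rcases Function.ne_iff.mp hv1ne with ⟨l0, hl0⟩
          have hl0' : v1 l0 ≠ 0 := by simpa using hl0
          have hS0 : 0 < ∑ l, v1 l ^ 2 :=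
            Finset.sum_pos' (fun _ _ => sq_nonneg _) ⟨l0, Finset.mem_univ l0, by positivity⟩
          set S0 := ∑ l, v1 l ^ 2 with hS0def
          have hsq : Real.sqrt S0 ^ 2 = S0 := Real.sq_sqrt hS0.le
          have hsqpos : 0 < Real.sqrt S0 := Real.sqrt_pos.mpr hS0
          refine ⟨fun l => -(Real.sqrt S0)⁻¹ * v1 l, 0, ?_, ?_, ?_⟩
          · have h1 : ∑ l, (-(Real.sqrt S0)⁻¹ * v1 l) ^ 2
                = ((Real.sqrt S0)⁻¹)^2 * ∑ l, v1 l ^ 2 := by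
              rw [Finset.mul_sum]
              exact Finset.sum_congr rfl fun l _ => by ring
            rw [h1, ← hS0def, inv_pow, hsq, inv_mul_cancel₀ (ne_of_gt hS0)]
          · have h1 : (fun l => -(Real.sqrt S0)⁻¹ * v1 l) ⬝ᵥ v1
                = -(Real.sqrt S0)⁻¹ * ∑ l, v1 l ^ 2 := by
              show ∑ l, (-(Real.sqrt S0)⁻¹ * v1 l) * v1 l = _
              rw [Finset.mul_sum]
              exact Finset.sum_congr rfl fun l _ => by ring
            rw [h1, ← hS0def]
            have h2 : 0 < (Real.sqrt S0)⁻¹ := by positivity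
            nlinarith
          · intro l
            rw [congrFun hm0 l]; simp
        · have hd : v1 ⬝ᵥ m ≠ 0 := by
            have := hv1avoid (Hs, Ts) (by rw [← hmeq]; exact hm0)
            rw [← hmeq] at this
            exact this
          rcases Function.ne_iff.mp hm0 with ⟨l0, hl0⟩
          have hl0' : m l0 ≠ 0 := by simpa using hl0
          have hSm : 0 < ∑ l, m l ^ 2 :=
            Finset.sum_pos' (fun _ _ => sq_nonneg _) ⟨l0, Finset.mem_univ l0, by positivity⟩
          set Sm := ∑ l, m l ^ 2 with hSmdef
          set d := v1 ⬝ᵥ m with hd2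
          set ε : ℝ := if 0 < d then -1 else 1 with hε
          have hε2 : ε ^ 2 = 1 := by
            rw [hε]; split <;> norm_num
          have hsq : Real.sqrt Sm ^ 2 = Sm := Real.sq_sqrt hSm.le
          have hsqpos : 0 < Real.sqrt Sm := Real.sqrt_pos.mpr hSm
          refine ⟨fun l => (ε * (Real.sqrt Sm)⁻¹) * m l, Real.sqrt Sm * ε, ?_, ?_, ?_⟩
          · have h1 : ∑ l, ((ε * (Real.sqrt Sm)⁻¹) * m l) ^ 2
                = (ε^2 * ((Real.sqrt Sm)⁻¹)^2) * ∑ l, m l ^ 2 := by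
              rw [Finset.mul_sum]
              exact Finset.sum_congr rfl fun l _ => by ring
            rw [h1, ← hSmdef, hε2, one_mul, inv_pow, hsq, inv_mul_cancel₀ (ne_of_gt hSm)]
          · have h1 : (fun l => (ε * (Real.sqrt Sm)⁻¹) * m l) ⬝ᵥ v1
                = (ε * (Real.sqrt Sm)⁻¹) * d := by
              show ∑ l, ((ε * (Real.sqrt Sm)⁻¹) * m l) * v1 l = _
              have hdm : d = ∑ l, m l * v1 l := by
                rw [hd2, dotProduct_comm]; rfl
              rw [hdm, Finset.mul_sum]
              exact Finset.sum_congr rfl fun l _ => by ring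
            rw [h1]
            have h2 : 0 < (Real.sqrt Sm)⁻¹ := by positivity
            rcases lt_or_gt_of_ne hd with hneg | hpos
            · have hεe : ε = 1 := by rw [hε, if_neg (by linarith)]
              rw [hεe]
              nlinarith
            · have hεe : ε = -1 := by rw [hε, if_pos hpos]
              rw [hεe]
              nlinarith
          · intro l
            have h1 : Real.sqrt Sm * ε * ((ε * (Real.sqrt Sm)⁻¹) * m l)
                = (ε^2) * ((Real.sqrt Sm) * (Real.sqrt Sm)⁻¹) * m l := by ring
            rw [h1, hε2, mul_inv_cancel₀ (ne_of_gt hsqpos)]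
            ring
      obtain ⟨u, lam, huu, huv, hlam⟩ := hmain
      obtain ⟨Γ, hΓ1, hΓ2, hΓ3⟩ := exists_Gamma u huu
      set β : ℝ := -(u ⬝ᵥ v1)⁻¹ with hβ
      have hβpos : 0 < β := by
        rw [hβ]
        have : (u ⬝ᵥ v1)⁻¹ < 0 := inv_neg''.mpr huv
        linarith
      set aa : ℝ := -(β * s) with haa
      set bb : Fin k → ℝ := β • (Γᵀ *ᵥ v1) with hbb
      -- residual identity
      have hres : ∀ x : Fin (k+1) → ℝ,
          u ⬝ᵥ x - bb ⬝ᵥ (Γᵀ *ᵥ x) - aa = β * (s - v1 ⬝ᵥ x) := by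
        intro x
        have h1 : bb ⬝ᵥ (Γᵀ *ᵥ x) = (Γ *ᵥ bb) ⬝ᵥ x := hdotlem bb Γ x
        have h2 : Γ *ᵥ bb = β • (v1 - (u ⬝ᵥ v1) • u) := by
          rw [hbb, Matrix.mulVec_smul, hΓ3 v1]
        have h3 : (Γ *ᵥ bb) ⬝ᵥ x = β * (v1 ⬝ᵥ x - (u ⬝ᵥ v1) * (u ⬝ᵥ x)) := by
          rw [h2]
          rw [smul_dotProduct, sub_dotProduct, smul_dotProduct]
          simp [smul_eq_mul]
        rw [h1, h3, haa]
        have h4 : β * (u ⬝ᵥ v1) = -1 := by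
          rw [hβ, neg_mul, inv_mul_cancel₀ (ne_of_lt huv)]
        linear_combination (u ⬝ᵥ x) * h4
      -- minimality
      have hmin : ∀ a' : ℝ, ∀ b' : Fin k → ℝ, PsiEmp Z τ u Γ aa bb ≤ PsiEmp Z τ u Γ a' b' := by
        apply psi_min Z hτ0 hτ1 u Γ aa bb g
        · intro i hi
          rw [hres (Z i)] at hi
          have : s < vals i := by nlinarith
          exact hgval_H i (Finset.mem_filter.mpr ⟨Finset.mem_univ i, this⟩)
        · intro i hi
          rw [hres (Z i)] at hi
          have : vals i < s := by nlinarith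
          exact hgval_L i (Finset.mem_filter.mpr ⟨Finset.mem_univ i, this⟩)
        · intro i
          simp only [hg]
          split_ifs with h1 h2
          · linarith
          · linarith
          · exact hμ1
        · intro i
          simp only [hg]
          split_ifs with h1 h2
          · linarith
          · linarith
          · exact hμ2
        · exact hgsum
        · intro j
          have hswap : ∑ i, g i * (Γᵀ *ᵥ Z i) j = ∑ l, Γ l j * m l := by
            have : ∀ i, g i * (Γᵀ *ᵥ Z i) j = ∑ l, Γ l j * (g i * Z i l) := by
              intro i
              rw [Matrix.mulVec, dotProduct, Finset.mul_sum]
              exact Finset.sum_congr rfl fun l _ => by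
                rw [Matrix.transpose_apply]; ring
            rw [Finset.sum_congr rfl fun i _ => this i, Finset.sum_comm]
            exact Finset.sum_congr rfl fun l _ => by
              rw [hm, Finset.mul_sum]
          rw [hswap]
          have : ∀ l, Γ l j * m l = lam * (Γ l j * u l) := by
            intro l
            rw [hlam l]; ring
          rw [Finset.sum_congr rfl fun l _ => this l, ← Finset.mul_sum]
          have : ∑ l, Γ l j * u l = (Γᵀ *ᵥ u) j := by
            rw [Matrix.mulVec, dotProduct]
            exact Finset.sum_congr rfl fun l _ => by rw [Matrix.transpose_apply]
          rw [this, hΓ2]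
          simp
      -- contradiction with z ∈ R
      have hzc := hz u Γ aa bb huu hΓ1 hΓ2 hmin
      have hresz := hres z
      have hneg : 0 < β * (v1 ⬝ᵥ z - s) := mul_pos hβpos (by linarith)
      nlinarith [hresz, hzc, hneg]
  · -- easy direction
    intro hz u Γ a b huu hΓ1 hΓ2 hmin
    by_contra hcon
    push_neg at hcon
    set v : Fin (k+1) → ℝ := (Γ *ᵥ b) - u with hv
    have hdot : ∀ x : Fin (k+1) → ℝ, v ⬝ᵥ x = b ⬝ᵥ (Γᵀ *ᵥ x) - u ⬝ᵥ x := by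
      intro x
      rw [hv, sub_dotProduct, hdotlem b Γ x]
    have hvu : v ⬝ᵥ u = -1 := by
      rw [hdot u, hΓ2]
      have huu1 : u ⬝ᵥ u = 1 := by
        have h1 : u ⬝ᵥ u = ∑ i, u i ^ 2 := by
          show (∑ i, u i * u i) = _
          exact Finset.sum_congr rfl fun i _ => (sq (u i)).symm
        rw [h1, huu]
      rw [huu1]
      simp
    have hvne : v ≠ 0 := by
      intro h0
      rw [h0] at hvu
      simp at hvu
    set c : ℝ := v ⬝ᵥ z with hc
    have hmem : ((Finset.univ.filter fun i => c ≤ v ⬝ᵥ Z i).card : ℝ) / n ∈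
        {r : ℝ | ∃ v' : Fin (k + 1) → ℝ, ∃ c' : ℝ, v' ≠ 0 ∧ c' ≤ v' ⬝ᵥ z ∧
          r = ((Finset.univ.filter fun i => c' ≤ v' ⬝ᵥ Z i).card : ℝ) / n} :=
      ⟨v, c, hvne, le_refl _, rfl⟩
    have hbdd : BddBelow {r : ℝ | ∃ v' : Fin (k + 1) → ℝ, ∃ c' : ℝ, v' ≠ 0 ∧ c' ≤ v' ⬝ᵥ z ∧
        r = ((Finset.univ.filter fun i => c' ≤ v' ⬝ᵥ Z i).card : ℝ) / n} := by
      refine ⟨0, ?_⟩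
      rintro r ⟨v', c', _, _, rfl⟩
      positivity
    have hdepthle : empDepth Z z ≤ ((Finset.univ.filter fun i => c ≤ v ⬝ᵥ Z i).card : ℝ) / n :=
      csInf_le hbdd hmem
    have hℓle : (ℓ:ℝ) ≤ (Finset.univ.filter fun i => c ≤ v ⬝ᵥ Z i).card := by
      have h1 : (ℓ:ℝ)/n ≤ ((Finset.univ.filter fun i => c ≤ v ⬝ᵥ Z i).card : ℝ) / n :=
        le_trans hz hdepthle
      rw [div_le_div_iff₀ hnR hnR] at h1
      nlinarith
    have hsubset : (Finset.univ.filter fun i => c ≤ v ⬝ᵥ Z i) ⊆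
        (Finset.univ.filter fun i => u ⬝ᵥ Z i - b ⬝ᵥ (Γᵀ *ᵥ Z i) - a < 0) := by
      intro i hi
      have h1 := (Finset.mem_filter.mp hi).2
      refine Finset.mem_filter.mpr ⟨Finset.mem_univ i, ?_⟩
      have h2 : c = b ⬝ᵥ (Γᵀ *ᵥ z) - u ⬝ᵥ z := hdot z
      have h3 := hdot (Z i)
      -- c > -a  and  r_i = -(v ⬝ᵥ Z i) - a ≤ -c - a < 0
      have h4 : -a < c := by rw [h2]; linarith
      linarith [h1, h3]
    have hcount := count_neg_le Z hτ0 hτ1 hn0 u Γ a b hmin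
    have hle2 : ((Finset.univ.filter fun i => c ≤ v ⬝ᵥ Z i).card : ℝ)
        ≤ ((Finset.univ.filter fun i => u ⬝ᵥ Z i - b ⬝ᵥ (Γᵀ *ᵥ Z i) - a < 0).card : ℝ) := by
      exact_mod_cast Finset.card_le_card hsubset
    linarith
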